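/- Let A be a residuated lattice, F a filter of A, and P a prime filter of A containing F. The following are equivalent: (1) P is an F-minimal prime filter; (2) P = D_F(P); (3) for every x ∈ A, exactly one of 'x ∈ P' and '(F : x) ⊆ P' holds. -/
import Mathlib


class ResiduatedLattice (α : Type*) extends Lattice α, CommMonoid α, BoundedOrder α where
  rimp : α → α → α
  one_eq_top : (1 : α) = ⊤
  adjunction : ∀ x y z : α, x * y ≤ z ↔ x ≤ rimp y z

variable {α : Type*} [ResiduatedLattice α]

/-- A filter of a residuated lattice: nonempty, closed under `⊙` and upward closed. -/
def IsFilter (F : Set α) : Prop :=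
  F.Nonempty ∧ (∀ x ∈ F, ∀ y ∈ F, x * y ∈ F) ∧ ∀ x ∈ F, ∀ y : α, x ≤ y → y ∈ F

/-- A prime filter: a proper filter such that `x ⊔ y ∈ P` implies `x ∈ P` or `y ∈ P`. -/
def IsPrimeFilter (P : Set α) : Prop :=
  IsFilter P ∧ P ≠ Set.univ ∧ ∀ x y : α, x ⊔ y ∈ P → x ∈ P ∨ y ∈ P

/-- A `∨`-closed subset: nonempty and closed under join. -/
def IsJoinClosed (C : Set α) : Prop :=
  C.Nonempty ∧ ∀ x ∈ C, ∀ y ∈ C, x ⊔ y ∈ C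

/-- The filter generated by a set. -/
def filterGen (X : Set α) : Set α := ⋂₀ {G : Set α | IsFilter G ∧ X ⊆ G}

/-- An `X`-minimal prime filter: prime, contains `X`, minimal among primes containing `X`. -/
def IsMinPrimeOver (X P : Set α) : Prop :=
  IsPrimeFilter P ∧ X ⊆ P ∧ ∀ Q : Set α, IsPrimeFilter Q → X ⊆ Q → Q ⊆ P → Q = P

/-- `ω_F(X) = {a | x ∨ a ∈ F for some x ∈ X}`. -/
def omegaF (F X : Set α) : Set α := {a : α | ∃ x ∈ X, x ⊔ a ∈ F}

/-- The coannihilator `(F : x) = {a | x ∨ a ∈ F}`. -/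
def coann (F : Set α) (x : α) : Set α := {a : α | x ⊔ a ∈ F}

/-- `D_F(H) = {a | x ∨ a ∈ F for some x ∉ H}`, the set of `F`-divisors of `H`. -/
def divisorsF (F H : Set α) : Set α := {a : α | ∃ x ∉ H, x ⊔ a ∈ F}

/-- A lattice ideal: nonempty, closed under join and downward closed. -/
def IsLatticeIdeal (I : Set α) : Prop :=
  I.Nonempty ∧ (∀ x ∈ I, ∀ y ∈ I, x ⊔ y ∈ I) ∧ ∀ x y : α, x ≤ y → y ∈ I → x ∈ I

/-- The lattice ideal generated by a set. -/
def idealGen (X : Set α) : Set α := ⋂₀ {I : Set α | IsLatticeIdeal I ∧ X ⊆ I}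

/-- An `ω_F`-filter: a filter of the form `ω_F(I)` for some lattice ideal `I`. -/
def IsOmegaFilter (F H : Set α) : Prop :=
  IsFilter H ∧ ∃ I : Set α, IsLatticeIdeal I ∧ H = omegaF F I

/-! ### Auxiliary lemmas -/

lemma rl_le_one (x : α) : x ≤ 1 := by
  rw [ResiduatedLattice.one_eq_top]; exact le_top

lemma rl_mul_sup (x y z : α) : x * (y ⊔ z) = x * y ⊔ x * z := by
  have key : ∀ w : α, x * (y ⊔ z) ≤ w ↔ x * y ⊔ x * z ≤ w := by
    intro w
    rw [mul_comm x (y ⊔ z), ResiduatedLattice.adjunction, sup_le_iff, sup_le_iff,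
      ← ResiduatedLattice.adjunction, ← ResiduatedLattice.adjunction,
      mul_comm y x, mul_comm z x]
  exact le_antisymm ((key _).2 le_rfl) ((key _).1 le_rfl)

lemma rl_mul_le_mul_left (x : α) {y z : α} (h : y ≤ z) : x * y ≤ x * z := by
  have : x * z = x * y ⊔ x * z := by rw [← rl_mul_sup, sup_eq_right.2 h]
  rw [this]; exact le_sup_left

lemma rl_mul_le_mul {a b c d : α} (h1 : a ≤ b) (h2 : c ≤ d) : a * c ≤ b * d :=
  (rl_mul_le_mul_left a h2).trans (by rw [mul_comm a d, mul_comm b d]; exact rl_mul_le_mul_left d h1)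

lemma rl_mul_le_left (a b : α) : a * b ≤ a := by
  have := rl_mul_le_mul_left a (rl_le_one b)
  rwa [mul_one] at this

lemma rl_pow_le_one (x : α) (n : ℕ) : x ^ n ≤ 1 := by
  induction n with
  | zero => simp
  | succ k ih => rw [pow_succ]; exact (rl_mul_le_left _ _).trans ih

lemma rl_pow_le_pow (x : α) {n m : ℕ} (h : n ≤ m) : x ^ m ≤ x ^ n := by
  obtain ⟨k, rfl⟩ := Nat.exists_eq_add_of_le h
  rw [pow_add]; exact rl_mul_le_left _ _

/-- The key combinatorial inequality replacing the binomial theorem. -/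
lemma rl_key {a b c1 c2 q1 q2 : α} {n m : ℕ} (h1 : q1 * a ^ n ≤ c1) (h2 : q2 * b ^ m ≤ c2) :
    ∀ k i j : ℕ, n + m ≤ i + j + k →
      q1 * q2 * (a ^ i * b ^ j * (a ⊔ b) ^ k) ≤ c1 ⊔ c2 := by
  intro k
  induction k with
  | zero =>
    intro i j hij
    rcases (by omega : n ≤ i ∨ m ≤ j) with h | h
    · calc q1 * q2 * (a ^ i * b ^ j * (a ⊔ b) ^ 0)
          = (q1 * a ^ i) * (q2 * b ^ j) := by
            rw [pow_zero, mul_one]; exact mul_mul_mul_comm q1 q2 _ _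
        _ ≤ (q1 * a ^ n) * 1 :=
            rl_mul_le_mul (rl_mul_le_mul_left q1 (rl_pow_le_pow a h))
              ((rl_mul_le_left q2 _).trans (rl_le_one q2))
        _ ≤ c1 ⊔ c2 := by rw [mul_one]; exact h1.trans le_sup_left
    · calc q1 * q2 * (a ^ i * b ^ j * (a ⊔ b) ^ 0)
          = (q2 * b ^ j) * (q1 * a ^ i) := by
            rw [pow_zero, mul_one, mul_mul_mul_comm]; exact mul_comm _ _
        _ ≤ (q2 * b ^ m) * 1 :=
            rl_mul_le_mul (rl_mul_le_mul_left q2 (rl_pow_le_pow b h))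
              ((rl_mul_le_left q1 _).trans (rl_le_one q1))
        _ ≤ c1 ⊔ c2 := by rw [mul_one]; exact h2.trans le_sup_right
  | succ k ih =>
    intro i j hij
    have e : q1 * q2 * (a ^ i * b ^ j * (a ⊔ b) ^ (k + 1))
        = q1 * q2 * (a ^ (i + 1) * b ^ j * (a ⊔ b) ^ k)
          ⊔ q1 * q2 * (a ^ i * b ^ (j + 1) * (a ⊔ b) ^ k) := by
      have : a ^ i * b ^ j * (a ⊔ b) ^ (k + 1)
          = (a ^ i * b ^ j * (a ⊔ b) ^ k) * (a ⊔ b) := by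
        rw [pow_succ, ← mul_assoc]
      rw [this, rl_mul_sup (a ^ i * b ^ j * (a ⊔ b) ^ k) a b]
      rw [rl_mul_sup (q1 * q2)]
      congr 1 <;> · rw [pow_succ]; ac_rfl
    rw [e]
    exact sup_le (ih (i + 1) j (by omega)) (ih i (j + 1) (by omega))

lemma rl_one_mem {G : Set α} (hG : IsFilter G) : (1 : α) ∈ G := by
  obtain ⟨⟨x, hx⟩, _, hup⟩ := hG
  exact hup x hx 1 (rl_le_one x)

lemma rl_pow_mem {G : Set α} (hG : IsFilter G) {x : α} (hx : x ∈ G) (n : ℕ) : x ^ n ∈ G := by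
  induction n with
  | zero => simpa using rl_one_mem hG
  | succ k ih => rw [pow_succ]; exact hG.2.1 _ ih _ hx

lemma rl_bot_not_mem {P : Set α} (hP : IsPrimeFilter P) : (⊥ : α) ∉ P := by
  intro hb
  exact hP.2.1 (Set.eq_univ_of_forall fun y => hP.1.2.2 _ hb y bot_le)

/-- Prime separation: a filter disjoint from a join-closed set extends to a prime filter
still disjoint from it. -/
lemma rl_prime_sep {F C : Set α} (hF : IsFilter F) (hC : IsJoinClosed C)
    (hd : ∀ c ∈ C, c ∉ F) : ∃ Q : Set α, IsPrimeFilter Q ∧ F ⊆ Q ∧ ∀ c ∈ C, c ∉ Q := by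
  set S : Set (Set α) := {G | IsFilter G ∧ F ⊆ G ∧ ∀ c ∈ C, c ∉ G} with hS
  have hchainub : ∀ c ⊆ S, IsChain (· ⊆ ·) c → c.Nonempty → ∃ ub ∈ S, ∀ s ∈ c, s ⊆ ub := by
    rintro c hcS hchain ⟨G0, hG0⟩
    refine ⟨⋃₀ c, ⟨⟨⟨1, ⟨G0, hG0, rl_one_mem (hcS hG0).1⟩⟩, ?_, ?_⟩, ?_, ?_⟩, fun s hs => Set.subset_sUnion_of_mem hs⟩
    · rintro x ⟨G1, hG1, hx⟩ y ⟨G2, hG2, hy⟩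
      rcases hchain.total hG1 hG2 with h | h
      · exact ⟨G2, hG2, (hcS hG2).1.2.1 _ (h hx) _ hy⟩
      · exact ⟨G1, hG1, (hcS hG1).1.2.1 _ hx _ (h hy)⟩
    · rintro x ⟨G1, hG1, hx⟩ y hxy
      exact ⟨G1, hG1, (hcS hG1).1.2.2 _ hx _ hxy⟩
    · exact fun x hx => ⟨G0, hG0, (hcS hG0).2.1 hx⟩
    · rintro a ha ⟨G1, hG1, haG⟩
      exact (hcS hG1).2.2 a ha haG
  obtain ⟨Q, hFQ, hQS, hQmax⟩ := zorn_subset_nonempty S hchainub F ⟨hF, le_refl _, hd⟩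
  -- Q is maximal in S; show it is prime
  obtain ⟨hQfil, hFQ', hQC⟩ := hQS
  refine ⟨Q, ⟨hQfil, ?_, ?_⟩, hFQ', hQC⟩
  · intro hu
    obtain ⟨c0, hc0⟩ := hC.1
    exact hQC c0 hc0 (hu ▸ Set.mem_univ c0)
  · intro x y hxy
    by_contra h
    push_neg at h
    obtain ⟨hx, hy⟩ := h
    -- the filter generated by Q and an element z
    have ext : ∀ z : α, z ∈ Q ⊔ ⊥ ∨ True → z ∉ Q →
        ∃ c ∈ C, ∃ q ∈ Q, ∃ n : ℕ, q * z ^ n ≤ c := by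
      intro z _ hz
      set G : Set α := {w | ∃ q ∈ Q, ∃ n : ℕ, q * z ^ n ≤ w} with hG
      have hGfil : IsFilter G := by
        refine ⟨⟨1, 1, rl_one_mem hQfil, 0, by simp [rl_le_one]⟩, ?_, ?_⟩
        · rintro u ⟨q1, hq1, n1, h1⟩ v ⟨q2, hq2, n2, h2⟩
          refine ⟨q1 * q2, hQfil.2.1 _ hq1 _ hq2, n1 + n2, ?_⟩
          calc q1 * q2 * z ^ (n1 + n2) = (q1 * z ^ n1) * (q2 * z ^ n2) := by
                rw [pow_add]; exact mul_mul_mul_comm _ _ _ _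
            _ ≤ u * v := rl_mul_le_mul h1 h2
        · rintro u ⟨q, hq, n, hn⟩ v huv
          exact ⟨q, hq, n, hn.trans huv⟩
      have hQG : Q ⊆ G := fun q hq => ⟨q, hq, 0, by simp⟩
      have hzG : z ∈ G := ⟨1, rl_one_mem hQfil, 1, by simp⟩
      have hGS : G ∉ S := by
        intro hGS
        have := hQmax hGS hQG
        exact hz (this hzG)
      simp only [hS, Set.mem_setOf_eq] at hGS
      push_neg at hGS
      obtain ⟨c, hcC, hcG⟩ := hGS hGfil (hFQ'.trans hQG)
      obtain ⟨q, hq, n, hn⟩ := hcG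
      exact ⟨c, hcC, q, hq, n, hn⟩
    obtain ⟨c1, hc1C, q1, hq1, n, hn⟩ := ext x (Or.inr trivial) hx
    obtain ⟨c2, hc2C, q2, hq2, m, hm⟩ := ext y (Or.inr trivial) hy
    have key := rl_key hn hm (n + m) 0 0 (by omega)
    simp only [pow_zero, one_mul] at key
    have hmem : q1 * q2 * (x ⊔ y) ^ (n + m) ∈ Q :=
      hQfil.2.1 _ (hQfil.2.1 _ hq1 _ hq2) _ (rl_pow_mem hQfil hxy _)
    have : c1 ⊔ c2 ∈ Q := hQfil.2.2 _ hmem _ key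
    exact hQC _ (hC.2 _ hc1C _ hc2C) this

lemma rl_div_subset {F P : Set α} (hP : IsPrimeFilter P) (hFP : F ⊆ P) :
    divisorsF F P ⊆ P := by
  rintro a ⟨x, hx, hxa⟩
  rcases hP.2.2 x a (hFP hxa) with h | h
  · exact absurd h hx
  · exact h

/-- Theorem 3.14: for a prime filter `P ⊇ F`, the following are equivalent:
`P` is an `F`-minimal prime filter; `P = D_F(P)`; for every `x`, `P` contains exactly one
of `x` and `(F : x)`. -/
theorem stmt_9 (F P : Set α) (hF : IsFilter F) (hP : IsPrimeFilter P) (hFP : F ⊆ P) :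
    (IsMinPrimeOver F P ↔ P = divisorsF F P) ∧
    (IsMinPrimeOver F P ↔ ∀ x : α, Xor' (x ∈ P) (coann F x ⊆ P)) := by
  have hDP : divisorsF F P ⊆ P := rl_div_subset hP hFP
  have h12 : IsMinPrimeOver F P ↔ P = divisorsF F P := by
    constructor
    · rintro ⟨_, _, hmin⟩
      refine Set.Subset.antisymm ?_ hDP
      intro a ha
      by_contra hnot
      -- hnot : a ∉ divisorsF F P, i.e. no x ∉ P with x ⊔ a ∈ F
      set C : Set α := {c | ∃ x, x ∉ P ∧ c = x ⊔ a} with hC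
      have hbot : (⊥ : α) ∉ P := rl_bot_not_mem hP
      have hCjc : IsJoinClosed C := by
        refine ⟨⟨⊥ ⊔ a, ⊥, hbot, rfl⟩, ?_⟩
        rintro u ⟨x1, hx1, rfl⟩ v ⟨x2, hx2, rfl⟩
        refine ⟨x1 ⊔ x2, ?_, by rw [sup_sup_sup_comm, sup_idem]⟩
        intro hsup
        rcases hP.2.2 _ _ hsup with h | h
        · exact hx1 h
        · exact hx2 h
      have hdisj : ∀ c ∈ C, c ∉ F := by
        rintro c ⟨x, hx, rfl⟩ hcF
        exact hnot ⟨x, hx, hcF⟩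
      obtain ⟨Q, hQprime, hFQ, hQC⟩ := rl_prime_sep hF hCjc hdisj
      have hQP : Q ⊆ P := by
        intro q hq
        by_contra hqP
        exact hQC (q ⊔ a) ⟨q, hqP, rfl⟩ (hQprime.1.2.2 _ hq _ le_sup_left)
      have : Q = P := hmin Q hQprime hFQ hQP
      have haQ : a ∉ Q := by
        intro haQ
        exact hQC (⊥ ⊔ a) ⟨⊥, hbot, rfl⟩ (hQprime.1.2.2 _ haQ _ le_sup_right)
      exact haQ (this ▸ ha)
    · intro hPD
      refine ⟨hP, hFP, ?_⟩
      intro Q hQ hFQ hQP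
      refine Set.Subset.antisymm hQP ?_
      intro a ha
      obtain ⟨x, hx, hxa⟩ := hPD ▸ ha
      rcases hQ.2.2 x a (hFQ hxa) with h | h
      · exact absurd (hQP h) hx
      · exact h
  refine ⟨h12, h12.trans ?_⟩
  constructor
  · intro hPD x
    by_cases hx : x ∈ P
    · obtain ⟨y, hy, hyx⟩ := hPD ▸ hx
      exact Or.inl ⟨hx, fun hsub => hy (hsub (by rwa [coann, Set.mem_setOf_eq, sup_comm]))⟩
    · refine Or.inr ⟨?_, hx⟩
      intro a ha
      by_contra haP
      exact hx (hPD ▸ (⟨a, haP, by rwa [sup_comm]⟩ : x ∈ divisorsF F P))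
  · intro h
    refine Set.Subset.antisymm ?_ hDP
    intro x hx
    rcases h x with ⟨_, hnsub⟩ | ⟨_, hnx⟩
    · simp only [Set.not_subset] at hnsub
      obtain ⟨a, ha, haP⟩ := hnsub
      simp only [coann, Set.mem_setOf_eq] at ha
      exact ⟨a, haP, by rwa [sup_comm]⟩
    · exact absurd hx hnx
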